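/- Let v be a Llull matrix with CLC structure on (S, ξ), and ρ_x = (1/(N−1)) Σ_{y≠x} v_{xy} the mean preference scores. Then x <_ξ y implies ρ_x ≥ ρ_y, and ρ_x = ρ_y holds if and only if v_{xy} = v_{yx}. -/

import Mathlib

/-- The minimum score along a path `x, z₁, …, zₖ, y` (the list gives the
intermediate points; the empty list is the direct link from `x` to `y`). -/
def chainMin {S : Type*} (v : S → S → ℝ) : S → List S → S → ℝ
  | x, [], y => v x y
  | x, z :: l, y => min (v x z) (chainMin v z l y)

/-- Indirect (max-min) score: supremum over all paths from `x` to `y`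
of the minimum direct score along the path. -/
noncomputable def iScore {S : Type*} (v : S → S → ℝ) (x y : S) : ℝ :=
  sSup {r : ℝ | ∃ l : List S, r = chainMin v x l y}

/-- A Llull matrix: preference scores in `[0,1]` with `v x y + v y x ≤ 1`. -/
def IsLlull {S : Type*} (v : S → S → ℝ) : Prop :=
  ∀ x y : S, x ≠ y → 0 ≤ v x y ∧ v x y ≤ 1 ∧ v x y + v y x ≤ 1


/-- CLC structure with respect to the linear order on `S` (the admissible order ξ):
(1) `v x y ≥ v y x` for `x < y`; (2) `v x z = max (v x y) (v y z)` and
(3) `v z x = min (v z y) (v y x)` for `x < y < z`; (4) `0 ≤ t x z − t x' z ≤ m x x'`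
for `z ∉ {x, x'}` where `x'` is the immediate successor (`x ⋖ x'`),
`t x y = v x y + v y x` and `m x y = v x y − v y x`. -/
def CLC {S : Type*} [LinearOrder S] (v : S → S → ℝ) : Prop :=
  (∀ x y : S, x < y → v y x ≤ v x y) ∧
  (∀ x y z : S, x < y → y < z → v x z = max (v x y) (v y z)) ∧
  (∀ x y z : S, x < y → y < z → v z x = min (v z y) (v y x)) ∧
  (∀ x x' z : S, x ⋖ x' → z ≠ x → z ≠ x' →
    0 ≤ (v x z + v z x) - (v x' z + v z x') ∧
    (v x z + v z x) - (v x' z + v z x') ≤ v x x' - v x' x)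

/-- Mean preference score `ρ x = (1/(N−1)) Σ_{y≠x} v x y`. -/
noncomputable def mps {S : Type*} [Fintype S] [DecidableEq S]
    (v : S → S → ℝ) (x : S) : ℝ :=
  ((Fintype.card S : ℝ) - 1)⁻¹ * ∑ y ∈ Finset.univ.erase x, v x y

section Aux
set_option linter.unusedSectionVars false
variable {S : Type*} [LinearOrder S] [Fintype S] [DecidableEq S] {v : S → S → ℝ}

lemma clc_le (hclc : CLC v) {a b : S} (hab : a ⋖ b)
    {z : S} (hza : z ≠ a) (hzb : z ≠ b) : v b z ≤ v a z := by
  rcases (lt_or_gt_of_ne hza) with h | h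
  · rw [hclc.2.2.1 z a b h hab.1]
    exact min_le_right _ _
  · rcases (lt_or_gt_of_ne hzb) with h2 | h2
    · exact absurd h2 (hab.2 h)
    · rw [hclc.2.1 a b z hab.1 h2]
      exact le_max_right _ _

lemma clc_eq_of_cov (hclc : CLC v) {a b : S} (hab : a ⋖ b)
    (hm : v a b = v b a) {z : S} (hza : z ≠ a) (hzb : z ≠ b) :
    v a z = v b z ∧ v z a = v z b := by
  obtain ⟨h4a, h4b⟩ := hclc.2.2.2 a b z hab hza hzb
  have ht : v a z + v z a = v b z + v z b := by linarith
  rcases (lt_or_gt_of_ne hza) with h | h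
  · have e1 : v z b = max (v z a) (v a b) := hclc.2.1 z a b h hab.1
    have e2 : v b z = min (v b a) (v a z) := hclc.2.2.1 z a b h hab.1
    have hBA : v a z ≤ v z a := hclc.1 z a h
    have hcA : v a b ≤ v z a := by
      by_contra hcon
      push_neg at hcon
      have h1 : max (v z a) (v a b) = v a b := max_eq_right hcon.le
      have h2 : min (v b a) (v a z) = v a z := min_eq_right (by linarith)
      rw [e1, e2, h1, h2] at ht
      linarith
    have h1 : max (v z a) (v a b) = v z a := max_eq_left hcA
    have h3 : v z a = v z b := by rw [e1, h1]
    refine ⟨?_, h3⟩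
    have h2' : min (v b a) (v a z) ≤ v a z := min_le_right _ _
    have h2 : min (v b a) (v a z) ≥ v a z := by
      rw [e2] at ht; linarith [ht, h3]
    rw [e2]; linarith
  · rcases (lt_or_gt_of_ne hzb) with h2 | h2
    · exact absurd h2 (hab.2 h)
    have e1 : v a z = max (v a b) (v b z) := hclc.2.1 a b z hab.1 h2
    have e2 : v z a = min (v z b) (v b a) := hclc.2.2.1 a b z hab.1 h2
    have hBA : v z b ≤ v b z := hclc.1 b z h2
    have hcA : v a b ≤ v b z := by
      by_contra hcon
      push_neg at hcon
      have h1 : max (v a b) (v b z) = v a b := max_eq_left hcon.le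
      have h2' : min (v z b) (v b a) = v z b := min_eq_left (by linarith)
      rw [e1, e2, h1, h2'] at ht
      linarith
    have h1 : max (v a b) (v b z) = v b z := max_eq_right hcA
    have h3 : v a z = v b z := by rw [e1, h1]
    refine ⟨h3, ?_⟩
    have h2' : min (v z b) (v b a) ≤ v z b := min_le_left _ _
    have h2 : min (v z b) (v b a) ≥ v z b := by
      rw [e1, h1] at ht; rw [e2] at ht; linarith
    rw [e2]; linarith

lemma sum_split {a b : S} (hab : a ≠ b) (f : S → ℝ) :
    ∑ z ∈ Finset.univ.erase a, f z
      = f b + ∑ z ∈ (Finset.univ.erase a).erase b, f z := by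
  rw [Finset.add_sum_erase]
  simp [Finset.mem_erase, hab.symm]

lemma card_pos' (hS : 2 ≤ Fintype.card S) : (0:ℝ) < (Fintype.card S : ℝ) - 1 := by
  have : (2:ℝ) ≤ (Fintype.card S : ℝ) := by exact_mod_cast hS
  linarith

lemma mps_cov_le (hS : 2 ≤ Fintype.card S) (hclc : CLC v) {a b : S} (hab : a ⋖ b) :
    mps v b ≤ mps v a := by
  have hne : a ≠ b := hab.1.ne
  have hsum : ∑ z ∈ Finset.univ.erase b, v b z ≤ ∑ z ∈ Finset.univ.erase a, v a z := by
    rw [sum_split hne.symm (v b ·), sum_split hne (v a ·), Finset.erase_right_comm]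
    refine add_le_add (hclc.1 a b hab.1) (Finset.sum_le_sum fun z hz => ?_)
    simp only [Finset.mem_erase] at hz
    exact clc_le hclc hab hz.2.1 hz.1
  exact mul_le_mul_of_nonneg_left hsum (inv_nonneg.2 (card_pos' hS).le)

lemma mps_cov_eq (hclc : CLC v) {a b : S} (hab : a ⋖ b)
    (hm : v a b = v b a) : mps v a = mps v b := by
  have hne : a ≠ b := hab.1.ne
  unfold mps
  congr 1
  rw [sum_split hne.symm (v b ·), sum_split hne (v a ·), Finset.erase_right_comm]
  refine congrArg₂ _ hm (Finset.sum_congr rfl fun z hz => ?_)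
  simp only [Finset.mem_erase] at hz
  exact (clc_eq_of_cov hclc hab hm hz.1 hz.2.1).1

lemma cov_eq_of_mps (hS : 2 ≤ Fintype.card S) (hclc : CLC v) {a b : S} (hab : a ⋖ b)
    (he : mps v a = mps v b) : v a b = v b a := by
  have hne : a ≠ b := hab.1.ne
  have hc := card_pos' hS
  have hsum : ∑ z ∈ Finset.univ.erase a, v a z = ∑ z ∈ Finset.univ.erase b, v b z :=
    mul_left_cancel₀ (inv_ne_zero hc.ne') he
  rw [sum_split hne.symm (v b ·), sum_split hne (v a ·), Finset.erase_right_comm] at hsum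
  have hle : ∑ z ∈ (Finset.univ.erase b).erase a, v b z
      ≤ ∑ z ∈ (Finset.univ.erase b).erase a, v a z := by
    refine Finset.sum_le_sum fun z hz => ?_
    simp only [Finset.mem_erase] at hz
    exact clc_le hclc hab hz.1 hz.2.1
  have := hclc.1 a b hab.1
  linarith
end Aux

section Chain
set_option linter.unusedSectionVars false
variable {S : Type*} [LinearOrder S] [Fintype S] [DecidableEq S] {v : S → S → ℝ}

lemma mps_antitone (hS : 2 ≤ Fintype.card S) (hclc : CLC v) :
    ∀ x y : S, x < y → mps v y ≤ mps v x := by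
  have key : ∀ n : ℕ, ∀ x y : S,
      (Finset.univ.filter fun w => x < w ∧ w < y).card = n → x < y → mps v y ≤ mps v x := by
    intro n
    induction n using Nat.strong_induction_on with
    | _ n ih =>
      intro x y hcard hxy
      rcases (Finset.univ.filter fun w => x < w ∧ w < y).eq_empty_or_nonempty with hemp | hne
      · have hcov : x ⋖ y := ⟨hxy, fun c h1 h2 =>
          (Finset.notMem_empty c) (hemp ▸ (Finset.mem_filter.2 ⟨Finset.mem_univ c, h1, h2⟩))⟩
        exact mps_cov_le hS hclc hcov
      · set s := Finset.univ.filter (fun w => x < w ∧ w < y) with hs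
        set z := s.min' hne with hz
        have hzmem : z ∈ s := s.min'_mem hne
        obtain ⟨-, hxz, hzy⟩ := Finset.mem_filter.1 hzmem
        have hcov : x ⋖ z := ⟨hxz, fun c h1 h2 =>
          absurd (s.min'_le c (Finset.mem_filter.2 ⟨Finset.mem_univ c, h1, h2.trans hzy⟩))
            (not_le.2 h2)⟩
        have hsub : (Finset.univ.filter fun w => z < w ∧ w < y) ⊆ s := by
          intro w hw
          obtain ⟨-, h1, h2⟩ := Finset.mem_filter.1 hw
          exact Finset.mem_filter.2 ⟨Finset.mem_univ w, hxz.trans h1, h2⟩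
        have hss : (Finset.univ.filter fun w => z < w ∧ w < y) ⊂ s :=
          (Finset.ssubset_iff_of_subset hsub).2 ⟨z, hzmem, by simp⟩
        have hlt : (Finset.univ.filter fun w => z < w ∧ w < y).card < n :=
          hcard ▸ Finset.card_lt_card hss
        exact (ih _ hlt z y rfl hzy).trans (mps_cov_le hS hclc hcov)
  intro x y hxy; exact key _ x y rfl hxy

lemma mps_eq_of_veq (hS : 2 ≤ Fintype.card S) (hclc : CLC v) :
    ∀ x y : S, x < y → v x y = v y x → mps v x = mps v y := by
  have key : ∀ n : ℕ, ∀ x y : S,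
      (Finset.univ.filter fun w => x < w ∧ w < y).card = n → x < y →
      v x y = v y x → mps v x = mps v y := by
    intro n
    induction n using Nat.strong_induction_on with
    | _ n ih =>
      intro x y hcard hxy hv
      rcases (Finset.univ.filter fun w => x < w ∧ w < y).eq_empty_or_nonempty with hemp | hne
      · have hcov : x ⋖ y := ⟨hxy, fun c h1 h2 =>
          (Finset.notMem_empty c) (hemp ▸ (Finset.mem_filter.2 ⟨Finset.mem_univ c, h1, h2⟩))⟩
        exact mps_cov_eq hclc hcov hv
      · set s := Finset.univ.filter (fun w => x < w ∧ w < y) with hs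
        set z := s.min' hne with hz
        have hzmem : z ∈ s := s.min'_mem hne
        obtain ⟨-, hxz, hzy⟩ := Finset.mem_filter.1 hzmem
        have hcov : x ⋖ z := ⟨hxz, fun c h1 h2 =>
          absurd (s.min'_le c (Finset.mem_filter.2 ⟨Finset.mem_univ c, h1, h2.trans hzy⟩))
            (not_le.2 h2)⟩
        -- min/max relations at z
        have e1 : v x y = max (v x z) (v z y) := hclc.2.1 x z y hxz hzy
        have e2 : v y x = min (v y z) (v z x) := hclc.2.2.1 x z y hxz hzy
        have l1 : v x z ≤ v x y := e1 ▸ le_max_left _ _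
        have l2 : v z y ≤ v x y := e1 ▸ le_max_right _ _
        have l3 : v y x ≤ v y z := e2 ▸ min_le_left _ _
        have l4 : v y x ≤ v z x := e2 ▸ min_le_right _ _
        have l5 : v z x ≤ v x z := hclc.1 x z hxz
        have l6 : v y z ≤ v z y := hclc.1 z y hzy
        have hxz' : v x z = v z x := le_antisymm (by linarith) l5
        have hzy' : v z y = v y z := le_antisymm (by linarith) l6
        have hsub : (Finset.univ.filter fun w => z < w ∧ w < y) ⊆ s := by
          intro w hw
          obtain ⟨-, h1, h2⟩ := Finset.mem_filter.1 hw
          exact Finset.mem_filter.2 ⟨Finset.mem_univ w, hxz.trans h1, h2⟩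
        have hss : (Finset.univ.filter fun w => z < w ∧ w < y) ⊂ s :=
          (Finset.ssubset_iff_of_subset hsub).2 ⟨z, hzmem, by simp⟩
        have hlt : (Finset.univ.filter fun w => z < w ∧ w < y).card < n :=
          hcard ▸ Finset.card_lt_card hss
        exact (mps_cov_eq hclc hcov hxz').trans (ih _ hlt z y rfl hzy hzy')
  exact fun x y => key _ x y rfl

lemma veq_of_mps_eq (hS : 2 ≤ Fintype.card S) (hclc : CLC v) :
    ∀ x y : S, x < y → mps v x = mps v y → v x y = v y x := by
  have key : ∀ n : ℕ, ∀ x y : S,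
      (Finset.univ.filter fun w => x < w ∧ w < y).card = n → x < y →
      mps v x = mps v y → v x y = v y x := by
    intro n
    induction n using Nat.strong_induction_on with
    | _ n ih =>
      intro x y hcard hxy he
      rcases (Finset.univ.filter fun w => x < w ∧ w < y).eq_empty_or_nonempty with hemp | hne
      · have hcov : x ⋖ y := ⟨hxy, fun c h1 h2 =>
          (Finset.notMem_empty c) (hemp ▸ (Finset.mem_filter.2 ⟨Finset.mem_univ c, h1, h2⟩))⟩
        exact cov_eq_of_mps hS hclc hcov he
      · set s := Finset.univ.filter (fun w => x < w ∧ w < y) with hs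
        set z := s.min' hne with hz
        have hzmem : z ∈ s := s.min'_mem hne
        obtain ⟨-, hxz, hzy⟩ := Finset.mem_filter.1 hzmem
        have hcov : x ⋖ z := ⟨hxz, fun c h1 h2 =>
          absurd (s.min'_le c (Finset.mem_filter.2 ⟨Finset.mem_univ c, h1, h2.trans hzy⟩))
            (not_le.2 h2)⟩
        -- squeeze: mps x = mps z = mps y
        have hxz' : mps v x = mps v z :=
          le_antisymm (he ▸ mps_antitone hS hclc z y hzy) (mps_cov_le hS hclc hcov)
        have hzy' : mps v z = mps v y := by rw [← hxz', he]
        have hm : v x z = v z x := cov_eq_of_mps hS hclc hcov hxz'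
        obtain ⟨t1, t2⟩ := clc_eq_of_cov hclc hcov hm (z := y) hxy.ne' hzy.ne'
        have hsub : (Finset.univ.filter fun w => z < w ∧ w < y) ⊆ s := by
          intro w hw
          obtain ⟨-, h1, h2⟩ := Finset.mem_filter.1 hw
          exact Finset.mem_filter.2 ⟨Finset.mem_univ w, hxz.trans h1, h2⟩
        have hss : (Finset.univ.filter fun w => z < w ∧ w < y) ⊂ s :=
          (Finset.ssubset_iff_of_subset hsub).2 ⟨z, hzmem, by simp⟩
        have hlt : (Finset.univ.filter fun w => z < w ∧ w < y).card < n :=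
          hcard ▸ Finset.card_lt_card hss
        have := ih _ hlt z y rfl hzy hzy'
        rw [t1, t2, this]
  exact fun x y => key _ x y rfl

end Chain


/-- For a Llull matrix with CLC structure: `x < y` implies `ρ x ≥ ρ y`, and
`ρ x = ρ y` iff `v x y = v y x`. -/
theorem stmt15 {S : Type*} [LinearOrder S] [Fintype S] [DecidableEq S]
    (hS : 2 ≤ Fintype.card S)
    (v : S → S → ℝ) (hv : IsLlull v) (hclc : CLC v) :
    (∀ x y : S, x < y → mps v y ≤ mps v x) ∧
    (∀ x y : S, mps v x = mps v y ↔ v x y = v y x) := by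
  refine ⟨mps_antitone hS hclc, fun x y => ⟨fun h => ?_, fun h => ?_⟩⟩
  · rcases lt_trichotomy x y with hxy | rfl | hyx
    · exact veq_of_mps_eq hS hclc x y hxy h
    · rfl
    · exact (veq_of_mps_eq hS hclc y x hyx h.symm).symm
  · rcases lt_trichotomy x y with hxy | rfl | hyx
    · exact mps_eq_of_veq hS hclc x y hxy h
    · rfl
    · exact (mps_eq_of_veq hS hclc y x hyx h.symm).symm
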